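/- Let G be a group, n ≥ 1, let x, y : Fin n → G, let σ, τ : Equiv.Perm (Fin n) be permutations, and let t, u ∈ G be elements such that t = x s * (y (σ s))⁻¹ for every s : Fin n and u = x s * (y (τ s))⁻¹ for every s : Fin n. Then there exists m with 1 ≤ m ≤ n such that (t * u⁻¹)^m = 1. -/
import Mathlib


/-- Bipartite-cycle lemma: if `t = xₛ (y (σ s))⁻¹` and `u = xₛ (y (τ s))⁻¹` for all
`s : Fin n`, with `σ, τ` permutations, then `(t u⁻¹)^m = 1` for some `1 ≤ m ≤ n`. -/
theorem bipartite_cycle_lemma {G : Type*} [Group G] (n : ℕ) (hn : 1 ≤ n)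
    (x y : Fin n → G) (σ τ : Equiv.Perm (Fin n)) (t u : G)
    (ht : ∀ s : Fin n, t = x s * (y (σ s))⁻¹)
    (hu : ∀ s : Fin n, u = x s * (y (τ s))⁻¹) :
    ∃ m : ℕ, 1 ≤ m ∧ m ≤ n ∧ (t * u⁻¹) ^ m = 1 := by
  set π : Equiv.Perm (Fin n) := σ.trans τ.symm with hπ
  -- key identity: t * u⁻¹ = x s * (x (π s))⁻¹
  have hy : ∀ k : Fin n, y k = u⁻¹ * x (τ.symm k) := by
    intro k
    have := hu (τ.symm k)
    rw [Equiv.apply_symm_apply] at this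
    rw [this]; group
  have key : ∀ s : Fin n, t * u⁻¹ = x s * (x (π s))⁻¹ := by
    intro s
    have := ht s
    rw [hy (σ s)] at this
    rw [this]
    simp [hπ, Equiv.trans_apply]
    group
  -- telescoping powers
  have pow : ∀ (m : ℕ) (s : Fin n), (t * u⁻¹) ^ m = x s * (x ((π ^ m) s))⁻¹ := by
    intro m
    induction m with
    | zero => intro s; simp
    | succ m ih =>
      intro s
      have : (t * u⁻¹) ^ (m + 1) = (t * u⁻¹) ^ m * (t * u⁻¹) := pow_succ _ _
      rw [this, ih s, key ((π ^ m) s)]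
      have hs : (π ^ (m + 1)) s = π ((π ^ m) s) := by
        rw [pow_succ', Equiv.Perm.mul_apply]
      rw [hs]; group
  -- pigeonhole on the orbit of some point
  have hs0 : (0 : ℕ) < n := hn
  set s0 : Fin n := ⟨0, hs0⟩
  have : ¬ Function.Injective (fun k : Fin (n + 1) => (π ^ (k : ℕ)) s0) := by
    intro hinj
    have := Fintype.card_le_of_injective _ hinj
    simp at this
  rw [Function.not_injective_iff] at this
  obtain ⟨i, j, hij, hne⟩ := this
  -- wlog i > j
  have hi := i.isLt
  have hj := j.isLt
  rcases lt_or_gt_of_ne (Fin.val_ne_of_ne hne) with h | h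
  · refine ⟨(j : ℕ) - (i : ℕ), by omega, by omega, ?_⟩
    rw [pow ((j : ℕ) - (i : ℕ)) ((π ^ (i : ℕ)) s0)]
    have : (π ^ ((j : ℕ) - (i : ℕ))) ((π ^ (i : ℕ)) s0) = (π ^ (j : ℕ)) s0 := by
      rw [← Equiv.Perm.mul_apply, ← pow_add, Nat.sub_add_cancel (le_of_lt h)]
    rw [this, ← hij]
    group
  · refine ⟨(i : ℕ) - (j : ℕ), by omega, by omega, ?_⟩
    rw [pow ((i : ℕ) - (j : ℕ)) ((π ^ (j : ℕ)) s0)]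
    have : (π ^ ((i : ℕ) - (j : ℕ))) ((π ^ (j : ℕ)) s0) = (π ^ (i : ℕ)) s0 := by
      rw [← Equiv.Perm.mul_apply, ← pow_add, Nat.sub_add_cancel (le_of_lt h)]
    rw [this, hij]
    group
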